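/- Dirichlet problem: on a finite connected weighted graph with positive edge weights and nonempty boundary set B ⊆ V, for any prescribed g : B → R there exists a unique function f : V → R with f = g on B and Δf(i) = 0 for all i ∉ B. Moreover f is the unique minimizer of the Dirichlet energy E(f) = (1/2) Σ_{(i,j)∈E} w_{ij}(f(i) − f(j))² among all functions agreeing with g on B. -/
import Mathlib

open Finset

section Aux

variable {V : Type*} [Fintype V] [DecidableEq V]
  (G : SimpleGraph V) [DecidableRel G.Adj]

lemma aux_swap (F : V → V → ℝ) :
    ∑ i, ∑ j ∈ G.neighborFinset i, F i j
      = ∑ i, ∑ j ∈ G.neighborFinset i, F j i := by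
  have h1 : ∀ (F : V → V → ℝ), ∑ i, ∑ j ∈ G.neighborFinset i, F i j
      = ∑ i : V, ∑ j : V, if G.Adj i j then F i j else 0 := by
    intro F
    refine Finset.sum_congr rfl fun i _ => ?_
    rw [SimpleGraph.neighborFinset_eq_filter, Finset.sum_filter]
  rw [h1, h1, Finset.sum_comm]
  refine Finset.sum_congr rfl fun i _ => Finset.sum_congr rfl fun j _ => ?_
  exact if_congr (G.adj_comm j i) rfl rfl

lemma aux_identity (w : V → V → ℝ) (hsym : ∀ i j, w i j = w j i) (u h : V → ℝ) :
    ∑ i, ∑ j ∈ G.neighborFinset i, w i j * (u i - u j) * (h i - h j)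
      = 2 * ∑ i, h i * ∑ j ∈ G.neighborFinset i, w i j * (u i - u j) := by
  have e1 : ∑ i, ∑ j ∈ G.neighborFinset i, w i j * (u i - u j) * (h i - h j)
      = (∑ i, ∑ j ∈ G.neighborFinset i, w i j * (u i - u j) * h i)
        - ∑ i, ∑ j ∈ G.neighborFinset i, w i j * (u i - u j) * h j := by
    rw [← Finset.sum_sub_distrib]
    refine Finset.sum_congr rfl fun i _ => ?_
    rw [← Finset.sum_sub_distrib]
    refine Finset.sum_congr rfl fun j _ => ?_
    ring
  have e2 : ∑ i, ∑ j ∈ G.neighborFinset i, w i j * (u i - u j) * h j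
      = ∑ i, ∑ j ∈ G.neighborFinset i, w j i * (u j - u i) * h i :=
    aux_swap G _
  have e4 : ∑ i, ∑ j ∈ G.neighborFinset i, w j i * (u j - u i) * h i
      = -∑ i, ∑ j ∈ G.neighborFinset i, w i j * (u i - u j) * h i := by
    rw [← Finset.sum_neg_distrib]
    refine Finset.sum_congr rfl fun i _ => ?_
    rw [← Finset.sum_neg_distrib]
    refine Finset.sum_congr rfl fun j _ => ?_
    rw [hsym j i]; ring
  have e5 : ∑ i, h i * ∑ j ∈ G.neighborFinset i, w i j * (u i - u j)
      = ∑ i, ∑ j ∈ G.neighborFinset i, w i j * (u i - u j) * h i := by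
    refine Finset.sum_congr rfl fun i _ => ?_
    rw [Finset.mul_sum]
    refine Finset.sum_congr rfl fun j _ => ?_
    ring
  rw [e1, e2, e4, e5]; ring

lemma aux_const (hconn : G.Connected) (h : V → ℝ)
    (hadj : ∀ i j, G.Adj i j → h i = h j) (i j : V) : h i = h j := by
  obtain ⟨p⟩ := hconn.preconnected i j
  induction p with
  | nil => rfl
  | cons a _ ih => exact (hadj _ _ a).trans ih

lemma aux_zero_of_Q (hconn : G.Connected) (w : V → V → ℝ)
    (hpos : ∀ i j, G.Adj i j → 0 < w i j)
    (B : Finset V) (hB : B.Nonempty) (h : V → ℝ)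
    (hb : ∀ i ∈ B, h i = 0)
    (hQ : ∑ i, ∑ j ∈ G.neighborFinset i, w i j * (h i - h j)^2 = 0) :
    h = 0 := by
  have hnonneg : ∀ i ∈ (Finset.univ : Finset V),
      0 ≤ ∑ j ∈ G.neighborFinset i, w i j * (h i - h j)^2 := by
    intro i _
    refine Finset.sum_nonneg fun j hj => ?_
    exact mul_nonneg (le_of_lt (hpos i j ((SimpleGraph.mem_neighborFinset G i j).mp hj)))
      (sq_nonneg _)
  have hinner := (Finset.sum_eq_zero_iff_of_nonneg hnonneg).mp hQ
  have hadj : ∀ i j, G.Adj i j → h i = h j := by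
    intro i j hij
    have hj : j ∈ G.neighborFinset i := (SimpleGraph.mem_neighborFinset G i j).mpr hij
    have h2 := (Finset.sum_eq_zero_iff_of_nonneg (fun j hj =>
      mul_nonneg (le_of_lt (hpos i j ((SimpleGraph.mem_neighborFinset G i j).mp hj)))
        (sq_nonneg _))).mp (hinner i (Finset.mem_univ i)) j hj
    have hwpos := hpos i j hij
    have : (h i - h j)^2 = 0 := by
      rcases mul_eq_zero.mp h2 with h3 | h3
      · exact absurd h3 (ne_of_gt hwpos)
      · exact h3
    have := pow_eq_zero_iff (n := 2) (by norm_num) |>.mp this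
    linarith [sub_eq_zero.mp this]
  obtain ⟨b, hbB⟩ := hB
  funext i
  have := aux_const G hconn h hadj i b
  simp [this, hb b hbB]

lemma aux_zero (hconn : G.Connected) (w : V → V → ℝ) (hsym : ∀ i j, w i j = w j i)
    (hpos : ∀ i j, G.Adj i j → 0 < w i j)
    (B : Finset V) (hB : B.Nonempty) (h : V → ℝ)
    (hb : ∀ i ∈ B, h i = 0)
    (hh : ∀ i ∉ B, ∑ j ∈ G.neighborFinset i, w i j * (h i - h j) = 0) :
    h = 0 := by
  apply aux_zero_of_Q G hconn w hpos B hB h hb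
  have e : ∑ i, ∑ j ∈ G.neighborFinset i, w i j * (h i - h j)^2
      = ∑ i, ∑ j ∈ G.neighborFinset i, w i j * (h i - h j) * (h i - h j) := by
    refine Finset.sum_congr rfl fun i _ => Finset.sum_congr rfl fun j _ => ?_
    ring
  rw [e, aux_identity G w hsym h h]
  rw [Finset.sum_eq_zero, mul_zero]
  intro i _
  by_cases hi : i ∈ B
  · rw [hb i hi, zero_mul]
  · rw [hh i hi, mul_zero]

def Tmap (w : V → V → ℝ) (B : Finset V) : (V → ℝ) →ₗ[ℝ] (V → ℝ) where
  toFun f := fun i => if i ∈ B then f i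
    else ∑ j ∈ G.neighborFinset i, w i j * (f i - f j)
  map_add' f g := by
    funext i
    by_cases hi : i ∈ B
    · simp [hi]
    · simp only [hi, if_false, Pi.add_apply]
      rw [← Finset.sum_add_distrib]
      refine Finset.sum_congr rfl fun j _ => ?_
      ring
  map_smul' c f := by
    funext i
    by_cases hi : i ∈ B
    · simp [hi]
    · simp only [hi, if_false, Pi.smul_apply, smul_eq_mul, RingHom.id_apply]
      rw [Finset.mul_sum]
      refine Finset.sum_congr rfl fun j _ => ?_
      ring

end Aux

theorem stmt_12 {V : Type*} [Fintype V] [DecidableEq V]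
    (G : SimpleGraph V) [DecidableRel G.Adj] (hconn : G.Connected)
    (w : V → V → ℝ) (hsym : ∀ i j, w i j = w j i)
    (hpos : ∀ i j, G.Adj i j → 0 < w i j)
    (B : Finset V) (hB : B.Nonempty) (g : V → ℝ)
    (E : (V → ℝ) → ℝ)
    (hE : ∀ f, E f = (1/4) * ∑ i, ∑ j ∈ G.neighborFinset i, w i j * (f i - f j)^2) :
    (∃! f : V → ℝ, (∀ i ∈ B, f i = g i) ∧
        (∀ i ∉ B, ∑ j ∈ G.neighborFinset i, w i j * (f i - f j) = 0)) ∧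
    (∀ f : V → ℝ, (∀ i ∈ B, f i = g i) →
      (∀ i ∉ B, ∑ j ∈ G.neighborFinset i, w i j * (f i - f j) = 0) →
      ∀ f' : V → ℝ, (∀ i ∈ B, f' i = g i) →
        E f ≤ E f' ∧ (E f' = E f → f' = f)) := by
  -- injectivity of the Dirichlet operator
  have hinj : Function.Injective (Tmap G w B) := by
    intro f1 f2 heq
    have hz : Tmap G w B (f1 - f2) = 0 := by
      rw [map_sub, heq, sub_self]
    have hzero : f1 - f2 = 0 := by
      apply aux_zero G hconn w hsym hpos B hB
      · intro i hi
        have := congrFun hz i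
        simpa [Tmap, hi] using this
      · intro i hi
        have := congrFun hz i
        simpa [Tmap, hi] using this
    exact sub_eq_zero.mp hzero
  have hsurj : Function.Surjective (Tmap G w B) :=
    (LinearMap.injective_iff_surjective).mp hinj
  obtain ⟨f, hf⟩ := hsurj (fun i => if i ∈ B then g i else 0)
  have hfb : ∀ i ∈ B, f i = g i := by
    intro i hi
    have := congrFun hf i
    simpa [Tmap, hi] using this
  have hfh : ∀ i ∉ B, ∑ j ∈ G.neighborFinset i, w i j * (f i - f j) = 0 := by
    intro i hi
    have := congrFun hf i
    simpa [Tmap, hi] using this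
  constructor
  · refine ⟨f, ⟨hfb, hfh⟩, ?_⟩
    rintro f2 ⟨hf2b, hf2h⟩
    have : f2 - f = 0 := by
      apply aux_zero G hconn w hsym hpos B hB
      · intro i hi
        simp [hf2b i hi, hfb i hi]
      · intro i hi
        have e : ∑ j ∈ G.neighborFinset i, w i j * ((f2 - f) i - (f2 - f) j)
            = (∑ j ∈ G.neighborFinset i, w i j * (f2 i - f2 j))
              - ∑ j ∈ G.neighborFinset i, w i j * (f i - f j) := by
          rw [← Finset.sum_sub_distrib]
          refine Finset.sum_congr rfl fun j _ => ?_
          simp; ring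
        rw [e, hf2h i hi, hfh i hi, sub_zero]
    exact sub_eq_zero.mp this
  · intro f1 hf1b hf1h f' hf'b
    set h : V → ℝ := fun i => f' i - f1 i with hdef
    have hbz : ∀ i ∈ B, h i = 0 := by
      intro i hi; simp [hdef, hf'b i hi, hf1b i hi]
    -- cross term is zero
    have hcross : ∑ i, ∑ j ∈ G.neighborFinset i, w i j * (f1 i - f1 j) * (h i - h j) = 0 := by
      rw [aux_identity G w hsym f1 h]
      rw [Finset.sum_eq_zero, mul_zero]
      intro i _
      by_cases hi : i ∈ B
      · rw [hbz i hi, zero_mul]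
      · rw [hf1h i hi, mul_zero]
    set Q : ℝ := ∑ i, ∑ j ∈ G.neighborFinset i, w i j * (h i - h j)^2 with hQdef
    have hQnonneg : 0 ≤ Q := by
      refine Finset.sum_nonneg fun i _ => Finset.sum_nonneg fun j hj => ?_
      exact mul_nonneg (le_of_lt (hpos i j ((SimpleGraph.mem_neighborFinset G i j).mp hj)))
        (sq_nonneg _)
    have hdecomp : E f' = E f1 + (1/4) * Q := by
      rw [hE, hE, hQdef]
      have expand : ∑ i, ∑ j ∈ G.neighborFinset i, w i j * (f' i - f' j)^2
          = (∑ i, ∑ j ∈ G.neighborFinset i, w i j * (f1 i - f1 j)^2)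
            + 2 * (∑ i, ∑ j ∈ G.neighborFinset i, w i j * (f1 i - f1 j) * (h i - h j))
            + ∑ i, ∑ j ∈ G.neighborFinset i, w i j * (h i - h j)^2 := by
        rw [Finset.mul_sum, ← Finset.sum_add_distrib, ← Finset.sum_add_distrib]
        refine Finset.sum_congr rfl fun i _ => ?_
        rw [Finset.mul_sum, ← Finset.sum_add_distrib, ← Finset.sum_add_distrib]
        refine Finset.sum_congr rfl fun j _ => ?_
        simp only [hdef]
        ring
      rw [expand, hcross]
      ring
    constructor
    · rw [hdecomp]; nlinarith
    · intro heq
      have hQ0 : Q = 0 := by rw [hdecomp] at heq; linarith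
      have hz : h = 0 := aux_zero_of_Q G hconn w hpos B hB h hbz (by rw [← hQdef]; exact hQ0)
      funext i
      have := congrFun hz i
      simp only [hdef, Pi.zero_apply] at this
      linarith
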